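/- Suppose n ≥ 3 and A is an arm sequence. Then the sequence (A_t / t)_{t ≥ 1} converges to some real number y_A ∈ [1, n − 1]. In fact, for all t, u ≥ 1 one has |A_t/t − A_u/u| < 1/min{t, u}. -/

import Mathlib

/-!  Arm sequences (Section 6 of the paper).  An arm sequence for `n` is an integer
sequence `A` with `t - 1 ≤ A t ≤ (n-1)t` for `t ≥ 1` and
`A (t+u) ∈ {A t + A u, A t + A u + 1}` for `t, u ≥ 1` (the value `A 0` is irrelevant). -/

namespace ArmCrystal

/-- `A` is an arm sequence for `n`. -/
def IsArmSeq (n : ℕ) (A : ℕ → ℤ) : Prop :=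
  (∀ t : ℕ, 1 ≤ t → (t : ℤ) - 1 ≤ A t ∧ A t ≤ ((n : ℤ) - 1) * t) ∧
  (∀ t u : ℕ, 1 ≤ t → 1 ≤ u → A (t + u) = A t + A u ∨ A (t + u) = A t + A u + 1)

lemma arm_mul {n : ℕ} {A : ℕ → ℤ} (hA : IsArmSeq n A) {t : ℕ} (ht : 1 ≤ t) :
    ∀ k : ℕ, 1 ≤ k →
      (k : ℤ) * A t ≤ A (k * t) ∧ A (k * t) ≤ (k : ℤ) * A t + ((k : ℤ) - 1) := by
  intro k hk
  induction k with
  | zero => omega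
  | succ m ih =>
    rcases Nat.eq_zero_or_pos m with hm | hm
    · subst hm; simp
    · obtain ⟨ih1, ih2⟩ := ih hm
      have hmt : 1 ≤ m * t := Nat.one_le_iff_ne_zero.mpr (by positivity)
      have hrec := hA.2 (m * t) t hmt ht
      have heq : (m + 1) * t = m * t + t := by ring
      have hexp : ((m : ℤ) + 1) * A t = (m : ℤ) * A t + A t := by ring
      rw [heq]
      push_cast
      rcases hrec with h | h <;> constructor <;> rw [h] <;> linarith

lemma arm_key {n : ℕ} {A : ℕ → ℤ} (hA : IsArmSeq n A) {t u : ℕ}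
    (ht : 1 ≤ t) (hu : 1 ≤ u) :
    |(A t : ℝ) / t - (A u : ℝ) / u| < 1 / (min t u : ℕ) := by
  obtain ⟨h1, h2⟩ := arm_mul hA ht u hu
  obtain ⟨h3, h4⟩ := arm_mul hA hu t ht
  rw [Nat.mul_comm t u] at h3 h4
  -- integer estimate
  have hmaxt : (t : ℤ) ≤ (max t u : ℕ) := by exact_mod_cast Int.ofNat_le.mpr (le_max_left t u)
  have hmaxu : (u : ℤ) ≤ (max t u : ℕ) := by exact_mod_cast Int.ofNat_le.mpr (le_max_right t u)
  have hint : |(u : ℤ) * A t - (t : ℤ) * A u| ≤ ((max t u : ℕ) : ℤ) - 1 := by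
    rw [abs_le]; constructor <;> linarith
  have htR : (0 : ℝ) < t := by exact_mod_cast ht
  have huR : (0 : ℝ) < u := by exact_mod_cast hu
  have hminR : (0 : ℝ) < ((min t u : ℕ) : ℝ) := by
    have : 1 ≤ min t u := le_min ht hu
    exact_mod_cast this
  have hdiff : (A t : ℝ) / t - (A u : ℝ) / u
      = (((u : ℤ) * A t - (t : ℤ) * A u : ℤ) : ℝ) / ((t : ℝ) * u) := by
    push_cast
    field_simp
  rw [hdiff, abs_div, abs_of_pos (mul_pos htR huR)]
  rw [div_lt_div_iff₀ (mul_pos htR huR) hminR]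
  have hcast : |(((u : ℤ) * A t - (t : ℤ) * A u : ℤ) : ℝ)| ≤ ((max t u : ℕ) : ℝ) - 1 := by
    rw [← Int.cast_abs]
    exact_mod_cast hint
  have hmm : ((min t u : ℕ) : ℝ) * ((max t u : ℕ) : ℝ) = (t : ℝ) * u := by
    have : min t u * max t u = t * u := min_mul_max t u
    exact_mod_cast this
  nlinarith [hminR, hcast, abs_nonneg (((u : ℤ) * A t - (t : ℤ) * A u : ℤ) : ℝ)]

/-- Lemma 6.4 of the paper: for an arm sequence `A`, the sequence `(A t / t)` converges
to some `y_A ∈ [1, n-1]`; indeed it is Cauchy, with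
`|A t / t - A u / u| < 1 / min{t, u}` for all `t, u ≥ 1`. -/
theorem arm_sequence_ratio_converges (n : ℕ) (hn : 3 ≤ n)
    (A : ℕ → ℤ) (hA : IsArmSeq n A) :
    (∃ y : ℝ, y ∈ Set.Icc (1 : ℝ) ((n : ℝ) - 1) ∧
      Filter.Tendsto (fun t : ℕ => (A t : ℝ) / t) Filter.atTop (nhds y)) ∧
    (∀ t u : ℕ, 1 ≤ t → 1 ≤ u →
      |(A t : ℝ) / t - (A u : ℝ) / u| < 1 / (min t u : ℕ)) := by
  have key : ∀ t u : ℕ, 1 ≤ t → 1 ≤ u →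
      |(A t : ℝ) / t - (A u : ℝ) / u| < 1 / (min t u : ℕ) :=
    fun t u ht hu => arm_key hA ht hu
  refine ⟨?_, key⟩
  have hc : CauchySeq (fun t : ℕ => (A t : ℝ) / t) := by
    rw [Metric.cauchySeq_iff]
    intro ε hε
    obtain ⟨N, hN⟩ := exists_nat_gt (1 / ε)
    refine ⟨N + 1, fun a ha b hb => ?_⟩
    have ha1 : 1 ≤ a := le_trans (Nat.le_add_left 1 N) ha
    have hb1 : 1 ≤ b := le_trans (Nat.le_add_left 1 N) hb
    have h := key a b ha1 hb1
    rw [Real.dist_eq]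
    refine lt_trans h ?_
    have hmin : (N : ℝ) + 1 ≤ ((min a b : ℕ) : ℝ) := by
      have : N + 1 ≤ min a b := le_min ha hb
      exact_mod_cast this
    have hNpos : (0 : ℝ) < (N : ℝ) + 1 := by positivity
    rw [div_lt_iff₀ (lt_of_lt_of_le hNpos hmin)]
    have : 1 / ε < (N : ℝ) + 1 := lt_trans hN (by linarith)
    rw [div_lt_iff₀ hε] at this
    nlinarith
  obtain ⟨y, hy⟩ := cauchySeq_tendsto_of_complete hc
  refine ⟨y, ⟨?_, ?_⟩, hy⟩
  · -- y ≥ 1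
    have h1 : Filter.Tendsto (fun t : ℕ => 1 - 1 / (t : ℝ)) Filter.atTop (nhds 1) := by
      have := tendsto_one_div_atTop_nhds_zero_nat (𝕜 := ℝ)
      have h := Filter.Tendsto.const_sub (1 : ℝ) this
      simpa using h
    refine le_of_tendsto_of_tendsto h1 hy ?_
    filter_upwards [Filter.eventually_ge_atTop 1] with t ht
    have htR : (0 : ℝ) < t := by exact_mod_cast ht
    have h := (hA.1 t ht).1
    have hR : (t : ℝ) - 1 ≤ (A t : ℝ) := by exact_mod_cast h
    rw [le_div_iff₀ htR]
    have hne : (t : ℝ) ≠ 0 := ne_of_gt htR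
    have : (1 - 1 / (t : ℝ)) * t = (t : ℝ) - 1 := by field_simp
    linarith
  · refine le_of_tendsto hy ?_
    filter_upwards [Filter.eventually_ge_atTop 1] with t ht
    have htR : (0 : ℝ) < t := by exact_mod_cast ht
    have h := (hA.1 t ht).2
    have : (A t : ℝ) ≤ ((n : ℝ) - 1) * t := by exact_mod_cast h
    rw [div_le_iff₀ htR]
    linarith

end ArmCrystal
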